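/- Let G be a compact topological group, H a Hilbert space, g ↦ α_g a strongly continuous unitary representation of G on H, and S a finite-rank bounded operator on H. Then the operator T = ∫_G α_g S α_{g⁻¹} dg (integral with respect to normalized Haar measure, defined weakly) is a compact operator. -/

import Mathlib

open MeasureTheory

/-- Averaging a finite-rank operator over a strongly continuous unitary representation of a
compact group (weak integral against Haar measure) yields a compact operator. -/
theorem stmt_6 {G : Type*} [Group G] [TopologicalSpace G] [IsTopologicalGroup G]
    [CompactSpace G] [T2Space G] [MeasurableSpace G] [BorelSpace G]
    {H : Type*} [NormedAddCommGroup H] [InnerProductSpace ℂ H] [CompleteSpace H]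
    (α : G →* (H →L[ℂ] H))
    (hunit : ∀ (g : G) (ξ : H), ‖α g ξ‖ = ‖ξ‖)
    (hcont : ∀ ξ : H, Continuous fun g => α g ξ)
    (S : H →L[ℂ] H) (hS : FiniteDimensional ℂ (LinearMap.range (S : H →ₗ[ℂ] H)))
    (T : H →L[ℂ] H)
    (hT : ∀ ξ η : H, (inner ℂ (T ξ) η : ℂ) =
      ∫ g, (inner ℂ (α g (S (α g⁻¹ ξ))) η : ℂ) ∂(Measure.haar : Measure G)) :
    IsCompactOperator T := by
  classical
  set μ : Measure G := Measure.haar with hμ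
  -- joint continuity of (g, v) ↦ α g v
  have hjoint : Continuous fun p : G × H => α p.1 p.2 := by
    rw [continuous_iff_continuousAt]
    rintro ⟨g₀, v₀⟩
    rw [ContinuousAt, tendsto_iff_norm_sub_tendsto_zero]
    have hb : ∀ p : G × H, ‖α p.1 p.2 - α g₀ v₀‖ ≤ ‖p.2 - v₀‖ + ‖α p.1 v₀ - α g₀ v₀‖ := by
      rintro ⟨g, v⟩
      calc ‖α g v - α g₀ v₀‖ = ‖(α g v - α g v₀) + (α g v₀ - α g₀ v₀)‖ := by
            rw [sub_add_sub_cancel]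
        _ ≤ ‖α g v - α g v₀‖ + ‖α g v₀ - α g₀ v₀‖ := norm_add_le _ _
        _ = ‖v - v₀‖ + ‖α g v₀ - α g₀ v₀‖ := by rw [← map_sub, hunit]
    have h1 : Filter.Tendsto (fun p : G × H => ‖p.2 - v₀‖ + ‖α p.1 v₀ - α g₀ v₀‖)
        (nhds (g₀, v₀)) (nhds 0) := by
      have hctr : Continuous fun p : G × H => α p.1 v₀ - α g₀ v₀ :=
        ((hcont v₀).comp continuous_fst).sub continuous_const
      have h2 : Filter.Tendsto (fun p : G × H => ‖p.2 - v₀‖ + ‖α p.1 v₀ - α g₀ v₀‖)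
          (nhds (g₀, v₀)) (nhds (‖v₀ - v₀‖ + ‖α g₀ v₀ - α g₀ v₀‖)) := by
        exact (((continuous_snd.sub continuous_const).norm).tendsto _).add
          (by simpa using (hctr.norm.tendsto (g₀, v₀)))
      simpa using h2
    exact squeeze_zero (fun p => norm_nonneg _) hb h1
  -- the integrand
  set f : H → G → H := fun ξ g => α g (S (α g⁻¹ ξ)) with hf
  have hfc : ∀ ξ, Continuous (f ξ) := by
    intro ξ
    have h1 : Continuous fun g : G => S (α g⁻¹ ξ) :=
      S.continuous.comp ((hcont ξ).comp continuous_inv)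
    exact hjoint.comp (continuous_id.prodMk h1)
  have hfi : ∀ ξ, Integrable (f ξ) μ := by
    intro ξ
    exact integrableOn_univ.mp
      ((hfc ξ).continuousOn.integrableOn_compact' isCompact_univ MeasurableSet.univ)
  -- T ξ is the Bochner integral of f ξ
  have hTν : ∀ ξ, T ξ = ∫ g, f ξ g ∂μ := by
    intro ξ
    refine ext_inner_right ℂ fun η => ?_
    have h1 : (inner ℂ (∫ g, f ξ g ∂μ) η : ℂ) = ∫ g, (inner ℂ (f ξ g) η : ℂ) ∂μ := by
      calc (inner ℂ (∫ g, f ξ g ∂μ) η : ℂ)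
          = starRingEnd ℂ (inner ℂ η (∫ g, f ξ g ∂μ)) := (inner_conj_symm _ _).symm
        _ = starRingEnd ℂ (∫ g, (inner ℂ η (f ξ g) : ℂ) ∂μ) := by rw [integral_inner (hfi ξ)]
        _ = ∫ g, starRingEnd ℂ (inner ℂ η (f ξ g) : ℂ) ∂μ := (integral_conj).symm
        _ = ∫ g, (inner ℂ (f ξ g) η : ℂ) ∂μ := by simp_rw [inner_conj_symm]
    rw [h1, hT ξ η]
  -- the compact set: closure of S '' closedBall inside the finite-dimensional range
  set E := LinearMap.range (S : H →ₗ[ℂ] H) with hE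
  haveI : CompleteSpace E := FiniteDimensional.complete ℂ E
  set S₀ : H →L[ℂ] E := S.codRestrict E (fun x => LinearMap.mem_range_self _ x) with hS₀
  set B : Set H := Metric.closedBall 0 1 with hB
  have hS₀B : Bornology.IsBounded (S₀ '' B) :=
    S₀.lipschitz.isBounded_image (Metric.isBounded_closedBall)
  have hCE : IsCompact (closure (S₀ '' B)) := hS₀B.isCompact_closure
  set C : Set H := Subtype.val '' (closure (S₀ '' B)) with hC
  have hCcomp : IsCompact C := hCE.image continuous_subtype_val
  have hSB : ∀ ξ ∈ B, S ξ ∈ C := fun ξ hξ =>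
    ⟨S₀ ξ, subset_closure (Set.mem_image_of_mem _ hξ), rfl⟩
  -- K = α(G × C)
  set K : Set H := (fun p : G × H => α p.1 p.2) '' (Set.univ ×ˢ C) with hK
  have hKcomp : IsCompact K := (isCompact_univ.prod hCcomp).image hjoint
  -- D = closed convex hull of K
  set D : Set H := closure (convexHull ℝ K) with hD
  have hDcomp : IsCompact D :=
    TotallyBounded.isCompact_of_isClosed
      ((totallyBounded_convexHull.mpr hKcomp.totallyBounded)).closure isClosed_closure
  -- scaled set
  set c : ℝ := (μ Set.univ).toReal with hc
  set Dc : Set H := (fun x : H => c • x) '' D with hDc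
  have hDccomp : IsCompact Dc := hDcomp.image (continuous_const_smul c)
  refine ⟨Dc, hDccomp, Filter.mem_of_superset (Metric.closedBall_mem_nhds 0 one_pos) ?_⟩
  intro ξ hξ
  haveI : IsFiniteMeasure μ := CompactSpace.isFiniteMeasure
  haveI : NeZero μ := ⟨Measure.measure_univ_ne_zero.mp (isOpen_univ.measure_pos μ Set.univ_nonempty).ne'⟩
  have hmem : ∀ g, f ξ g ∈ K := by
    intro g
    refine ⟨(g, S (α g⁻¹ ξ)), ⟨Set.mem_univ _, ?_⟩, rfl⟩
    apply hSB
    simp only [hB, Metric.mem_closedBall, dist_zero_right, hunit]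
    simpa [hunit] using hξ
  have havg : (⨍ g, f ξ g ∂μ) ∈ D :=
    ((convex_convexHull ℝ K).closure).average_mem isClosed_closure
      (Filter.Eventually.of_forall fun g => subset_closure (subset_convexHull ℝ K (hmem g))) (hfi ξ)
  have hcne : c ≠ 0 := by
    simp only [hc]
    refine ENNReal.toReal_ne_zero.mpr ⟨?_, measure_ne_top μ _⟩
    exact (NeZero.ne μ) ∘ Measure.measure_univ_eq_zero.mp
  have : T ξ = c • ⨍ g, f ξ g ∂μ := by
    rw [hTν ξ, average_eq, smul_smul, measureReal_def, ← hc, mul_inv_cancel₀ hcne, one_smul]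
  rw [Set.mem_preimage, this]
  exact Set.mem_image_of_mem _ havg
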